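/- There exists a badly approximable real number α such that the sequence (1/log M) ∑_{m=1}^M 1/(m² ‖mα‖²) does not converge as M → ∞. (One may take α with continued fraction expansion [0; a₁, a₂, …] where a_j = 1 for ρ^{2k} < j ≤ ρ^{2k+1} and a_j = a for ρ^{2k+1} < j ≤ ρ^{2k+2}, with a and then ρ sufficiently large.) -/

import Mathlib

open scoped Real
open Filter

/-- Distance from a real number to the nearest integer. -/
noncomputable def nd (x : ℝ) : ℝ := |x - round x|

/-- A real number is badly approximable if `‖qα‖ ≥ C/q` for all positive integers `q`. -/
def BadlyApprox (α : ℝ) : Prop := ∃ C > 0, ∀ q : ℕ, 0 < q → C / q ≤ nd (q * α)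

lemma nd_le (x : ℝ) (n : ℤ) : nd x ≤ |x - n| := by
  rw [nd]
  by_contra hcon
  push_neg at hcon
  have h1 : |x - (round x : ℝ)| ≤ 1/2 := abs_sub_round x
  have h2 : |x - (n:ℝ)| < 1/2 := lt_of_lt_of_le hcon h1
  have hne : round x ≠ n := by
    rintro rfl
    exact lt_irrefl _ hcon
  have hd : (1:ℝ) ≤ |(round x : ℝ) - n| := by
    have h3 : round x - n ≠ 0 := sub_ne_zero.mpr hne
    have h4 : 1 ≤ |round x - n| := Int.one_le_abs h3
    calc (1:ℝ) = ((1:ℤ):ℝ) := by norm_num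
      _ ≤ ((|round x - n| : ℤ) : ℝ) := by exact_mod_cast h4
      _ = |(round x : ℝ) - n| := by push_cast [abs_sub_comm]; rw [abs_sub_comm]
  have tri : |(round x:ℝ) - n| ≤ |x - round x| + |x - n| := by
    have : (round x:ℝ) - n = (x - n) - (x - round x) := by ring
    rw [this]
    calc |(x - n) - (x - (round x:ℝ))| ≤ |x - n| + |x - (round x:ℝ)| := abs_sub _ _
      _ = |x - (round x:ℝ)| + |x - n| := by ring
  linarith

lemma nd_nonneg (x : ℝ) : 0 ≤ nd x := abs_nonneg _

lemma nd_le_half (x : ℝ) : nd x ≤ 1/2 := abs_sub_round x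

lemma nd_eq_of (x : ℝ) (n : ℤ) (h : |x - n| ≤ 1/2) : nd x = |x - n| := by
  have hle : nd x ≤ |x - n| := nd_le x n
  rcases eq_or_ne (round x) n with h' | h'
  · rw [nd, h']
  · have hd : (1:ℝ) ≤ |(round x : ℝ) - n| := by
      have h3 : round x - n ≠ 0 := sub_ne_zero.mpr h'
      have h4 : 1 ≤ |round x - n| := Int.one_le_abs h3
      calc (1:ℝ) = ((1:ℤ):ℝ) := by norm_num
        _ ≤ ((|round x - n| : ℤ) : ℝ) := by exact_mod_cast h4
        _ = |(round x : ℝ) - n| := by push_cast; rfl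
    have tri : |(round x:ℝ) - n| ≤ |x - round x| + |x - n| := by
      have heq : (round x:ℝ) - n = (x - n) - (x - round x) := by ring
      rw [heq]
      calc |(x - n) - (x - (round x:ℝ))| ≤ |x - n| + |x - (round x:ℝ)| := abs_sub _ _
        _ = |x - (round x:ℝ)| + |x - n| := by ring
    have : |x - n| ≤ |x - (round x:ℝ)| := by linarith
    exact le_antisymm hle this

lemma nd_fract_le (x : ℝ) (h : Int.fract x ≤ 1/2) : nd x = Int.fract x := by
  have h0 := Int.fract_nonneg x
  have heq : x - (⌊x⌋:ℝ) = Int.fract x := (Int.self_sub_floor x).symm ▸ rfl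
  have habs : |x - (⌊x⌋:ℝ)| = Int.fract x := by
    rw [heq, abs_of_nonneg h0]
  rw [nd_eq_of x ⌊x⌋ (by rw [habs]; linarith), habs]

lemma nd_fract_ge (x : ℝ) (h : 1/2 ≤ Int.fract x) : nd x = 1 - Int.fract x := by
  have h1 := Int.fract_lt_one x
  have heq : x - ((⌊x⌋ + 1 : ℤ):ℝ) = Int.fract x - 1 := by
    push_cast
    have : x - (⌊x⌋:ℝ) = Int.fract x := (Int.self_sub_floor x).symm ▸ rfl
    linarith
  have habs : |x - ((⌊x⌋ + 1 : ℤ):ℝ)| = 1 - Int.fract x := by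
    rw [heq, abs_of_nonpos (by linarith)]
    ring
  rw [nd_eq_of x (⌊x⌋ + 1) (by rw [habs]; linarith), habs]



namespace S19
def rr : ℕ := 1000000

def aseq : ℕ → ℕ := fun j => if Odd (Nat.log rr (j - 1)) then 1000 else 1

lemma one_le_aseq (j : ℕ) : 1 ≤ aseq j := by unfold aseq; split <;> norm_num
lemma aseq_le (j : ℕ) : aseq j ≤ 1000 := by unfold aseq; split <;> norm_num

def qd : ℕ → ℕ
  | 0 => 1
  | 1 => 1
  | (n+2) => aseq (n+2) * qd (n+1) + qd n

def pd : ℕ → ℕ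
  | 0 => 0
  | 1 => 1
  | (n+2) => aseq (n+2) * pd (n+1) + pd n

lemma one_le_qd : ∀ n, 1 ≤ qd n
  | 0 => le_refl 1
  | 1 => le_refl 1
  | (n+2) => by
      have h1 := one_le_qd (n+1)
      have h2 := one_le_qd n
      simp only [qd]
      nlinarith [one_le_aseq (n+2)]

lemma qd_le_succ (n : ℕ) : qd n ≤ qd (n+1) := by
  cases n with
  | zero => simp [qd]
  | succ m =>
    show qd (m+1) ≤ qd (m+2)
    simp only [qd]
    nlinarith [one_le_aseq (m+2), one_le_qd m, one_le_qd (m+1)]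

lemma qd_mono : Monotone qd := monotone_nat_of_le_succ qd_le_succ

lemma qd_lt_succ (n : ℕ) (hn : 1 ≤ n) : qd n < qd (n+1) := by
  obtain ⟨m, rfl⟩ := Nat.exists_eq_add_of_le' hn
  show qd (m+1) < qd (m+2)
  simp only [qd]
  nlinarith [one_le_aseq (m+2), one_le_qd m, one_le_qd (m+1)]

lemma qd_succ_le (n : ℕ) : qd (n+1) ≤ 1001 * qd n := by
  cases n with
  | zero => simp [qd]
  | succ m =>
    show qd (m+2) ≤ 1001 * qd (m+1)
    simp only [qd]
    nlinarith [aseq_le (m+2), one_le_qd m, one_le_qd (m+1), qd_le_succ m]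

lemma two_mul_qd_le (n : ℕ) : 2 * qd n ≤ qd (n+2) := by
  simp only [qd]
  nlinarith [one_le_aseq (n+2), qd_le_succ n, one_le_qd n]

lemma pow_half_le_qd : ∀ n, 2^(n/2) ≤ qd n
  | 0 => by simp [qd]
  | 1 => by simp [qd]
  | (n+2) => by
      have h := pow_half_le_qd n
      have h2 := two_mul_qd_le n
      have : (n+2)/2 = n/2 + 1 := by omega
      rw [this, pow_succ]
      omega

lemma qd_le_pow : ∀ n, qd n ≤ 1001^n
  | 0 => by simp [qd]
  | (n+1) => by
      calc qd (n+1) ≤ 1001 * qd n := qd_succ_le n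
      _ ≤ 1001 * 1001^n := by have := qd_le_pow n; nlinarith
      _ = 1001^(n+1) := by ring

lemma le_qd : ∀ n, n ≤ qd (n+1)
  | 0 => by simp [qd]
  | (n+1) => by
      have h := le_qd n
      have h2 := one_le_qd (n+1)
      show n+1 ≤ qd (n+1+1)
      have : qd (n+2) = aseq (n+2) * qd (n+1) + qd n := rfl
      nlinarith [one_le_qd n, Nat.mul_le_mul_right (qd (n+1)) (one_le_aseq (n+2))]

lemma det : ∀ n, (qd n : ℤ) * pd (n+1) - pd n * qd (n+1) = (-1)^n
  | 0 => by simp [qd, pd]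
  | (n+1) => by
      have h := det n
      have hq : (qd (n+2) : ℤ) = aseq (n+2) * qd (n+1) + qd n := by
        show ((aseq (n+2) * qd (n+1) + qd n : ℕ) : ℤ) = _; push_cast; ring
      have hp : (pd (n+2) : ℤ) = aseq (n+2) * pd (n+1) + pd n := by
        show ((aseq (n+2) * pd (n+1) + pd n : ℕ) : ℤ) = _; push_cast; ring
      show (qd (n+1) : ℤ) * pd (n+2) - pd (n+1) * qd (n+2) = (-1)^(n+1)
      rw [hq, hp]
      ring_nf
      ring_nf at h
      linarith [h]

noncomputable def t (k : ℕ) : ℝ := 1 / ((qd k : ℝ) * qd (k+1))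

lemma qd_real_pos (n : ℕ) : (0:ℝ) < qd n := by
  exact_mod_cast Nat.lt_of_lt_of_le Nat.zero_lt_one (one_le_qd n)

lemma qd_mul_pos (k : ℕ) : (0:ℝ) < (qd k : ℝ) * qd (k+1) :=
  mul_pos (qd_real_pos k) (qd_real_pos (k+1))

lemma t_pos (k : ℕ) : 0 < t k :=
  div_pos one_pos (qd_mul_pos k)

lemma t_anti (k : ℕ) : t (k+1) ≤ t k := by
  unfold t
  apply one_div_le_one_div_of_le
  · exact qd_mul_pos k
  · have h1 : (qd k : ℝ) ≤ qd (k+1) := by exact_mod_cast qd_le_succ k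
    have h2 : (qd (k+1) : ℝ) ≤ qd (k+2) := by exact_mod_cast qd_le_succ (k+1)
    nlinarith [qd_real_pos k, qd_real_pos (k+1), qd_real_pos (k+2)]

lemma t_le_geom (k : ℕ) : t k ≤ 2 * (1/2)^k := by
  have hq : (2:ℕ)^(k/2) ≤ qd k := pow_half_le_qd k
  have hq' : (2:ℝ)^(k/2 : ℕ) ≤ qd k := by exact_mod_cast hq
  have hpow : (2:ℝ)^k ≤ 2 * ((2:ℝ)^(k/2:ℕ) * (2:ℝ)^(k/2:ℕ)) := by
    rw [← pow_add]
    have : (2:ℝ) * 2^(k/2 + k/2) = 2^(k/2+k/2+1) := by ring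
    rw [this]
    apply pow_le_pow_right₀ (by norm_num)
    omega
  have h1 : (2:ℝ)^k ≤ 2 * ((qd k : ℝ) * qd (k+1)) := by
    have h2 : (2:ℝ)^(k/2:ℕ) ≤ qd (k+1) := le_trans hq' (by exact_mod_cast qd_le_succ k)
    have hp : (0:ℝ) < 2^(k/2:ℕ) := by positivity
    nlinarith
  have h2 : (2:ℝ) * (1/2)^k = 2 / 2^k := by
    rw [one_div, inv_pow]; ring
  rw [t, h2, div_le_div_iff₀ (qd_mul_pos k) (by positivity)]
  nlinarith [h1]

lemma summable_tail (j : ℕ) : Summable (fun i => (-1:ℝ)^i * t (i + j)) := by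
  apply Summable.of_abs
  apply Summable.of_nonneg_of_le (fun i => abs_nonneg _) (fun i => ?_)
    (Summable.mul_left 2 (summable_geometric_of_lt_one (by norm_num) (by norm_num) : Summable fun i:ℕ => (1/2:ℝ)^i))
  rw [abs_mul, abs_pow, abs_neg, abs_one, one_pow, one_mul,
    abs_of_pos (t_pos _)]
  calc t (i + j) ≤ 2 * (1/2)^(i+j) := t_le_geom _
    _ ≤ 2 * (1/2)^i := by
        apply mul_le_mul_of_nonneg_left _ (by norm_num)
        apply pow_le_pow_of_le_one (by norm_num) (by norm_num)
        omega

lemma summable_alt : Summable (fun i => (-1:ℝ)^i * t i) := by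
  simpa using summable_tail 0

noncomputable def alp : ℝ := ∑' k, (-1:ℝ)^k * t k

noncomputable def Tt (j : ℕ) : ℝ := ∑' i, (-1:ℝ)^i * t (i + j)

lemma alp_eq (j : ℕ) :
    alp = (∑ k ∈ Finset.range j, (-1:ℝ)^k * t k) + (-1)^j * Tt j := by
  have h := Summable.sum_add_tsum_nat_add (f := fun i => (-1:ℝ)^i * t i) j summable_alt
  rw [alp, ← h]
  congr 1
  rw [Tt, ← tsum_mul_left]
  congr 1 with i
  show (-1:ℝ)^(i+j) * t (i+j) = (-1)^j * ((-1)^i * t (i+j))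
  rw [pow_add]
  ring

lemma Tt_rec (j : ℕ) : Tt j = t j - Tt (j+1) := by
  have h := Summable.tsum_eq_zero_add (summable_tail j)
  rw [Tt, h]
  simp only [pow_zero, one_mul, Nat.zero_add]
  have : ∀ i:ℕ, (-1:ℝ)^(i+1) * t (i + 1 + j) = -((-1)^i * t (i + (j+1))) := by
    intro i
    have : i + 1 + j = i + (j+1) := by omega
    rw [this, pow_succ]
    ring
  rw [tsum_congr this, tsum_neg]
  rw [Tt]
  ring

noncomputable def Pp (j n : ℕ) : ℝ := ∑ k ∈ Finset.range n, (-1:ℝ)^k * t (k + j)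

lemma Pp_succ (j n : ℕ) : Pp j (n+1) = t j - Pp (j+1) n := by
  rw [Pp, Finset.sum_range_succ']
  simp only [pow_zero, one_mul, Nat.zero_add]
  have : ∀ k:ℕ, (-1:ℝ)^(k+1) * t (k + 1 + j) = -((-1)^k * t (k + (j+1))) := by
    intro k
    have : k + 1 + j = k + (j+1) := by omega
    rw [this, pow_succ]
    ring
  rw [Finset.sum_congr rfl (fun k _ => this k), Finset.sum_neg_distrib]
  rw [Pp]
  ring

lemma Pp_bounds : ∀ n j, 0 ≤ Pp j n ∧ Pp j n ≤ t j := by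
  intro n
  induction n with
  | zero => intro j; constructor <;> simp [Pp, le_of_lt (t_pos j)]
  | succ n ih =>
    intro j
    have h := ih (j+1)
    rw [Pp_succ]
    constructor
    · have := t_anti j; linarith [h.2]
    · linarith [h.1]

lemma Tt_nonneg (j : ℕ) : 0 ≤ Tt j := by
  have hs : HasSum (fun i => (-1:ℝ)^i * t (i + j)) (Tt j) := (summable_tail j).hasSum
  have ht := hs.tendsto_sum_nat
  exact ge_of_tendsto' ht (fun n => (Pp_bounds n j).1)

lemma Tt_le (j : ℕ) : Tt j ≤ t j := by
  have hs : HasSum (fun i => (-1:ℝ)^i * t (i + j)) (Tt j) := (summable_tail j).hasSum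
  have ht := hs.tendsto_sum_nat
  exact le_of_tendsto' ht (fun n => (Pp_bounds n j).2)

lemma detR (n : ℕ) : (qd n : ℝ) * pd (n+1) - pd n * qd (n+1) = (-1)^n := by
  have h := det n
  have : ((qd n : ℤ) * pd (n+1) - pd n * qd (n+1) : ℤ) = ((-1:ℤ))^n := h
  exact_mod_cast congrArg (Int.cast : ℤ → ℝ) this

lemma conv_partial : ∀ j, ∑ k ∈ Finset.range j, (-1:ℝ)^k * t k = pd j / qd j
  | 0 => by simp [qd, pd]
  | (j+1) => by
      rw [Finset.sum_range_succ, conv_partial j]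
      have h := detR j
      have h1 : (qd j : ℝ) ≠ 0 := ne_of_gt (qd_real_pos j)
      have h2 : (qd (j+1) : ℝ) ≠ 0 := ne_of_gt (qd_real_pos (j+1))
      have h1' : (qd j : ℝ) ≠ 0 := ne_of_gt (qd_real_pos j)
      have h2' : (qd (j+1) : ℝ) ≠ 0 := ne_of_gt (qd_real_pos (j+1))
      rw [t]
      field_simp
      linear_combination (-1:ℝ) * h

lemma qd_alp_sub_pd (j : ℕ) :
    (qd j : ℝ) * alp - pd j = (-1)^j * ((qd j : ℝ) * Tt j) := by
  have h := alp_eq j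
  rw [conv_partial j] at h
  have h1 : (qd j : ℝ) ≠ 0 := ne_of_gt (qd_real_pos j)
  rw [h]
  field_simp
  ring

noncomputable def beta (j : ℕ) : ℝ := (qd j : ℝ) * Tt j

lemma beta_le (j : ℕ) : beta j ≤ 1 / qd (j+1) := by
  rw [beta]
  calc (qd j : ℝ) * Tt j ≤ qd j * t j :=
        mul_le_mul_of_nonneg_left (Tt_le j) (le_of_lt (qd_real_pos j))
    _ = 1 / qd (j+1) := by
        have h1 : (qd j : ℝ) ≠ 0 := ne_of_gt (qd_real_pos j)
        have h2 : (qd (j+1) : ℝ) ≠ 0 := ne_of_gt (qd_real_pos (j+1))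
        rw [t]
        field_simp

lemma beta_ge (j : ℕ) : 1 / (2 * qd (j+1)) ≤ beta j := by
  have hrec : Tt j ≥ t j - t (j+1) := by
    rw [Tt_rec j]; linarith [Tt_le (j+1)]
  have h1 : (0:ℝ) < qd j := qd_real_pos j
  have h2 : (0:ℝ) < qd (j+1) := qd_real_pos (j+1)
  have h3 : (0:ℝ) < qd (j+2) := qd_real_pos (j+2)
  have key : (qd j : ℝ) * (t j - t (j+1)) = ((qd (j+2) : ℝ) - qd j) / (qd (j+1) * qd (j+2)) := by
    rw [t, t]
    field_simp
  have hsub : (qd (j+2) : ℝ) - qd j = (aseq (j+2) : ℝ) * qd (j+1) := by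
    have : qd (j+2) = aseq (j+2) * qd (j+1) + qd j := rfl
    rw [this]
    push_cast
    ring
  have ha : (1:ℝ) ≤ aseq (j+2) := by exact_mod_cast one_le_aseq (j+2)
  have hqq : (qd j : ℝ) ≤ qd (j+1) := by exact_mod_cast qd_le_succ j
  have hq2 : (qd (j+2) : ℝ) = aseq (j+2) * qd (j+1) + qd j := by
    have : qd (j+2) = aseq (j+2) * qd (j+1) + qd j := rfl
    rw [this]; push_cast; ring
  have step : (1:ℝ) / (2 * qd (j+1)) ≤ (aseq (j+2) : ℝ) * qd (j+1) / (qd (j+1) * qd (j+2)) := by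
    rw [div_le_div_iff₀ (by positivity) (by positivity)]
    have : (qd (j+2) : ℝ) ≤ 2 * aseq (j+2) * qd (j+1) := by
      rw [hq2]; nlinarith
    nlinarith
  calc (1:ℝ) / (2 * qd (j+1)) ≤ (aseq (j+2) : ℝ) * qd (j+1) / (qd (j+1) * qd (j+2)) := step
    _ = ((qd (j+2) : ℝ) - qd j) / (qd (j+1) * qd (j+2)) := by rw [hsub]
    _ = (qd j : ℝ) * (t j - t (j+1)) := key.symm
    _ ≤ (qd j : ℝ) * Tt j := mul_le_mul_of_nonneg_left hrec (le_of_lt h1)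

lemma beta_pos (j : ℕ) : 0 < beta j := by
  have h : (0:ℝ) < 1/(2 * qd (j+1)) :=
    div_pos one_pos (by nlinarith [qd_real_pos (j+1)])
  exact lt_of_lt_of_le h (beta_ge j)

lemma best_approx (j : ℕ) (m n : ℤ) (hm : 0 < m) (hmlt : m < qd (j+1)) :
    beta j ≤ |(m:ℝ) * alp - n| := by
  have hdet := det j
  have hsq : ((-1:ℤ)^j) * ((-1)^j) = 1 := by
    rw [← pow_add]
    exact Even.neg_one_pow ⟨j, by ring⟩
  set x : ℤ := (-1)^j * (m * pd (j+1) - n * qd (j+1)) with hxdef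
  set y : ℤ := (-1)^j * (n * qd j - m * pd j) with hydef
  have hxy_m : x * qd j + y * qd (j+1) = m := by
    rw [hxdef, hydef]
    linear_combination ((-1:ℤ)^j * m) * hdet + m * hsq
  have hxy_n : x * pd j + y * pd (j+1) = n := by
    rw [hxdef, hydef]
    linear_combination ((-1:ℤ)^j * n) * hdet + n * hsq
  have hmR : (m:ℝ) = (x:ℝ) * qd j + (y:ℝ) * qd (j+1) := by
    exact_mod_cast (congrArg (Int.cast : ℤ → ℝ) hxy_m).symm
  have hnR : (n:ℝ) = (x:ℝ) * pd j + (y:ℝ) * pd (j+1) := by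
    exact_mod_cast (congrArg (Int.cast : ℤ → ℝ) hxy_n).symm
  have e1 : (m:ℝ) * alp - n
      = (-1)^j * ((x:ℝ) * ((qd j:ℝ) * Tt j) - (y:ℝ) * ((qd (j+1):ℝ) * Tt (j+1))) := by
    rw [hmR, hnR]
    linear_combination (x:ℝ) * (qd_alp_sub_pd j) + (y:ℝ) * (qd_alp_sub_pd (j+1))
  have habs : |(m:ℝ) * alp - n| = |(x:ℝ) * beta j - (y:ℝ) * beta (j+1)| := by
    rw [e1, abs_mul, abs_pow, abs_neg, abs_one, one_pow, one_mul, beta, beta]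
  rw [habs]
  have hb0 : 0 < beta j := beta_pos j
  have hb1 : 0 < beta (j+1) := beta_pos (j+1)
  have hqjZ : (1:ℤ) ≤ qd j := by exact_mod_cast one_le_qd j
  have hq1Z : (1:ℤ) ≤ qd (j+1) := by exact_mod_cast one_le_qd (j+1)
  rcases lt_trichotomy y 0 with hy | hy | hy
  · rcases lt_trichotomy x 0 with hx | hx | hx
    · -- x<0, y<0 : m < 0, contradiction
      exfalso
      have hx1 : x ≤ -1 := by omega
      have hy1 : y ≤ -1 := by omega
      nlinarith [hxy_m]
    · -- x = 0, y < 0 : m = y * qd (j+1) < 0, contradiction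
      exfalso
      have hy1 : y ≤ -1 := by omega
      rw [hx] at hxy_m
      nlinarith [hxy_m]
    · -- x > 0, y < 0 : value ≥ beta j + beta (j+1)
      have hx1 : (1:ℝ) ≤ x := by exact_mod_cast hx
      have hy1 : (y:ℝ) ≤ -1 := by exact_mod_cast (by omega : y ≤ -1)
      have : beta j ≤ (x:ℝ) * beta j - (y:ℝ) * beta (j+1) := by nlinarith
      exact le_trans this (le_abs_self _)
  · -- y = 0 : m = x * qd j, x ≥ 1
    have hx : 1 ≤ x := by
      rw [hy] at hxy_m
      nlinarith [hxy_m]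
    have hx1 : (1:ℝ) ≤ x := by exact_mod_cast hx
    have hyR : (y:ℝ) = 0 := by exact_mod_cast hy
    rw [hyR]
    have : beta j ≤ (x:ℝ) * beta j - 0 * beta (j+1) := by nlinarith
    exact le_trans this (le_abs_self _)
  · rcases lt_trichotomy x 0 with hx | hx | hx
    · -- x < 0, y > 0 : value ≤ -(beta j)
      have hx1 : (x:ℝ) ≤ -1 := by exact_mod_cast (by omega : x ≤ -1)
      have hy1 : (1:ℝ) ≤ y := by exact_mod_cast hy
      have : beta j ≤ -((x:ℝ) * beta j - (y:ℝ) * beta (j+1)) := by nlinarith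
      exact le_trans this (neg_le_abs _)
    · -- x = 0, y > 0 : m ≥ qd (j+1), contradiction
      exfalso
      have hy1 : 1 ≤ y := hy
      rw [hx] at hxy_m
      nlinarith [hxy_m]
    · -- x > 0, y > 0 : m ≥ qd j + qd (j+1) > qd (j+1), contradiction
      exfalso
      have hx1 : 1 ≤ x := hx
      have hy1 : 1 ≤ y := hy
      nlinarith [hxy_m]

lemma best_approx_nd (j : ℕ) (m : ℕ) (h1 : 1 ≤ m) (h2 : m < qd (j+1)) :
    beta j ≤ nd ((m:ℝ) * alp) := by
  rw [nd]
  have h := best_approx j (m:ℤ) (round ((m:ℝ) * alp)) (by exact_mod_cast h1)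
    (by exact_mod_cast h2)
  calc beta j ≤ |((m:ℤ):ℝ) * alp - (round ((m:ℝ) * alp) : ℝ)| := h
    _ = |(m:ℝ) * alp - round ((m:ℝ) * alp)| := by norm_num

lemma exists_j (q : ℕ) (hq : 1 ≤ q) : ∃ j, 1 ≤ j ∧ qd j ≤ q ∧ q < qd (j+1) := by
  set j := Nat.findGreatest (fun j => qd j ≤ q) (q+1) with hj
  have hP1 : qd 1 ≤ q := by simpa [qd] using hq
  have h1 : 1 ≤ j := Nat.le_findGreatest (by omega) hP1
  have h2 : qd j ≤ q := by
    exact Nat.findGreatest_spec (P := fun j => qd j ≤ q) (m := 1) (by omega) hP1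
  refine ⟨j, h1, h2, ?_⟩
  by_cases hc : j + 1 ≤ q + 1
  · have := Nat.findGreatest_is_greatest (P := fun j => qd j ≤ q) (n := q+1) (k := j+1) (by omega) hc
    omega
  · have hj2 : q + 1 ≤ j := by omega
    have : q + 1 ≤ qd (j+1) := le_trans hj2 (le_qd j)
    omega

lemma badly : BadlyApprox alp := by
  refine ⟨1/2002, by norm_num, fun q hq => ?_⟩
  obtain ⟨j, hj1, hj2, hj3⟩ := exists_j q hq
  have hnd : beta j ≤ nd ((q:ℝ) * alp) := best_approx_nd j q hq hj3
  have hb : 1/(2 * (qd (j+1):ℝ)) ≤ beta j := beta_ge j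
  have hq1 : (qd (j+1):ℝ) ≤ 1001 * qd j := by exact_mod_cast qd_succ_le j
  have hq2 : (qd j : ℝ) ≤ q := by exact_mod_cast hj2
  have hqpos : (0:ℝ) < q := by exact_mod_cast hq
  have key : 1/2002/(q:ℝ) ≤ 1/(2 * (qd (j+1):ℝ)) := by
    rw [div_div, div_le_div_iff₀ (by positivity) (by nlinarith [qd_real_pos (j+1)])]
    nlinarith [qd_real_pos (j+1), qd_real_pos j]
  linarith

lemma sum_inv_sq_aux : ∀ N : ℕ, 1 ≤ N →
    ∑ n ∈ Finset.Icc 2 N, (1:ℝ)/(n:ℝ)^2 ≤ 1 - 1/N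
  | 0, h => by omega
  | 1, _ => by norm_num
  | (N+2), _ => by
      have h := sum_inv_sq_aux (N+1) (by omega)
      rw [Finset.sum_Icc_succ_top (by omega : 2 ≤ N+2)]
      have hN : (0:ℝ) < (N:ℝ)+1 := by positivity
      have hN2 : (0:ℝ) < (N:ℝ)+2 := by positivity
      have hstep : (1:ℝ)/((N:ℝ)+2)^2 ≤ 1/((N:ℝ)+1) - 1/((N:ℝ)+2) := by
        rw [div_sub_div _ _ (ne_of_gt hN) (ne_of_gt hN2), div_le_div_iff₀ (by positivity) (by positivity)]
        nlinarith
      push_cast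
      push_cast at h
      have hc : ((N:ℝ)+1+1) = (N:ℝ)+2 := by ring
      rw [hc]
      linarith

lemma sum_inv_sq (N : ℕ) : ∑ n ∈ Finset.Icc 2 N, (1:ℝ)/(n:ℝ)^2 ≤ 1 := by
  rcases Nat.eq_zero_or_pos N with h | h
  · subst h; norm_num
  · have := sum_inv_sq_aux N h
    have hN : (0:ℝ) < N := by exact_mod_cast h
    have : (0:ℝ) ≤ 1/(N:ℝ) := by positivity
    linarith [sum_inv_sq_aux N h]

lemma not_distinct (j : ℕ) (m m' : ℕ) (hm'1 : 1 ≤ m') (hm' : m' < m)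
    (hmlt : m < qd (j+1))
    (hfl : ⌊2 * nd ((m:ℝ)*alp) / beta j⌋₊ = ⌊2 * nd ((m':ℝ)*alp) / beta j⌋₊)
    (hside : (Int.fract ((m:ℝ)*alp) ≤ 1/2) ↔ (Int.fract ((m':ℝ)*alp) ≤ 1/2)) :
    False := by
  have hB := beta_pos j
  have hu0 : 0 ≤ nd ((m:ℝ)*alp) := nd_nonneg _
  have hv0 : 0 ≤ nd ((m':ℝ)*alp) := nd_nonneg _
  set u := nd ((m:ℝ)*alp) with hu
  set v := nd ((m':ℝ)*alp) with hv
  -- |u - v| < beta j / 2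
  have hclose : |u - v| < beta j / 2 := by
    have h1 : (⌊2 * u / beta j⌋₊ : ℝ) ≤ 2 * u / beta j :=
      Nat.floor_le (div_nonneg (by linarith) hB.le)
    have h2 : 2 * u / beta j < ⌊2 * u / beta j⌋₊ + 1 := Nat.lt_floor_add_one _
    have h3 : (⌊2 * v / beta j⌋₊ : ℝ) ≤ 2 * v / beta j :=
      Nat.floor_le (div_nonneg (by linarith) hB.le)
    have h4 : 2 * v / beta j < ⌊2 * v / beta j⌋₊ + 1 := Nat.lt_floor_add_one _
    rw [hfl] at h1 h2
    rw [abs_lt]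
    constructor
    · have : 2 * v / beta j - 2 * u / beta j < 1 := by linarith
      rw [div_sub_div_same] at this
      have := (div_lt_one hB).mp (by linarith [this] : (2*v - 2*u)/beta j < 1)
      linarith
    · have : 2 * u / beta j - 2 * v / beta j < 1 := by linarith
      rw [div_sub_div_same] at this
      have := (div_lt_one hB).mp (by linarith [this] : (2*u - 2*v)/beta j < 1)
      linarith
  -- fractional parts are close
  have hfr : |Int.fract ((m:ℝ)*alp) - Int.fract ((m':ℝ)*alp)| < beta j / 2 := by
    by_cases hc : Int.fract ((m:ℝ)*alp) ≤ 1/2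
    · have hc' := hside.mp hc
      have e1 : u = Int.fract ((m:ℝ)*alp) := by rw [hu]; exact nd_fract_le _ hc
      have e2 : v = Int.fract ((m':ℝ)*alp) := by rw [hv]; exact nd_fract_le _ hc'
      rw [← e1, ← e2]
      exact hclose
    · have hcm : 1/2 < Int.fract ((m:ℝ)*alp) := lt_of_not_ge hc
      have hcm' : 1/2 < Int.fract ((m':ℝ)*alp) := lt_of_not_ge (fun h => hc (hside.mpr h))
      have e1 : u = 1 - Int.fract ((m:ℝ)*alp) := by rw [hu]; exact nd_fract_ge _ (le_of_lt hcm)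
      have e2 : v = 1 - Int.fract ((m':ℝ)*alp) := by rw [hv]; exact nd_fract_ge _ (le_of_lt hcm')
      have e3 : Int.fract ((m:ℝ)*alp) - Int.fract ((m':ℝ)*alp) = v - u := by
        rw [e1, e2]; ring
      rw [e3, abs_sub_comm]
      exact hclose
  -- the difference d = m - m' violates best approximation
  set d := m - m' with hd
  have hd1 : 1 ≤ d := by omega
  have hdlt : d < qd (j+1) := by omega
  have hba : beta j ≤ nd ((d:ℝ) * alp) := best_approx_nd j d hd1 hdlt
  have hcast : ((d:ℕ):ℝ) = (m:ℝ) - m' := by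
    rw [hd]
    push_cast [Nat.cast_sub (le_of_lt hm')]
    ring
  have hnd_small : nd ((d:ℝ) * alp) < beta j := by
    have hk : ((d:ℝ) * alp) - ((⌊(m:ℝ)*alp⌋ - ⌊(m':ℝ)*alp⌋ : ℤ):ℝ)
        = Int.fract ((m:ℝ)*alp) - Int.fract ((m':ℝ)*alp) := by
      rw [hcast]
      push_cast
      rw [Int.fract, Int.fract]
      ring
    have := nd_le ((d:ℝ) * alp) (⌊(m:ℝ)*alp⌋ - ⌊(m':ℝ)*alp⌋)
    rw [hk] at this
    calc nd ((d:ℝ) * alp) ≤ |Int.fract ((m:ℝ)*alp) - Int.fract ((m':ℝ)*alp)| := this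
      _ < beta j / 2 := hfr
      _ < beta j := by linarith
  linarith

set_option maxHeartbeats 1200000 in
lemma block_bound (i : ℕ) :
    ∑ m ∈ Finset.Ico (qd (i+1)) (qd (i+2)), (1:ℝ)/((m:ℝ)^2 * nd ((m:ℝ)*alp)^2)
      ≤ 128 * (aseq (i+2):ℝ)^2 := by
  set j := i + 1 with hjdef
  have hB := beta_pos j
  set N := 2 * qd (j+1) with hN
  set F : ℕ → ℕ × Bool := fun m =>
    (⌊2 * nd ((m:ℝ)*alp) / beta j⌋₊, decide (Int.fract ((m:ℝ)*alp) ≤ 1/2)) with hF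
  have hmem : ∀ m ∈ Finset.Ico (qd j) (qd (j+1)), 1 ≤ m ∧ m < qd (j+1) := by
    intro m hm
    rw [Finset.mem_Ico] at hm
    exact ⟨le_trans (one_le_qd j) hm.1, hm.2⟩
  -- floor value bounds
  have hn2 : ∀ m ∈ Finset.Ico (qd j) (qd (j+1)), 2 ≤ (F m).1 ∧ (F m).1 ≤ N := by
    intro m hm
    obtain ⟨h1, h2⟩ := hmem m hm
    have hnd : beta j ≤ nd ((m:ℝ)*alp) := best_approx_nd j m h1 h2
    have hnd0 : 0 ≤ nd ((m:ℝ)*alp) := nd_nonneg _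
    constructor
    · apply Nat.le_floor
      rw [le_div_iff₀ hB]
      push_cast
      linarith
    · have hfl : (⌊2 * nd ((m:ℝ)*alp) / beta j⌋₊ : ℝ) ≤ 2 * nd ((m:ℝ)*alp) / beta j :=
        Nat.floor_le (div_nonneg (by linarith) hB.le)
      have hndle : nd ((m:ℝ)*alp) ≤ 1/2 := nd_le_half _
      have hub : 2 * nd ((m:ℝ)*alp) / beta j ≤ (N:ℝ) := by
        rw [div_le_iff₀ hB]
        have hbge : 1/(2 * (qd (j+1):ℝ)) ≤ beta j := beta_ge j
        have hq1 : (0:ℝ) < qd (j+1) := qd_real_pos (j+1)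
        have hone : (1:ℝ) ≤ beta j * (2 * (qd (j+1):ℝ)) := by
          rw [← div_le_iff₀ (by positivity)]
          exact hbge
        have : (N:ℝ) = 2 * (qd (j+1):ℝ) := by rw [hN]; push_cast; ring
        rw [this]
        nlinarith
      have : (⌊2 * nd ((m:ℝ)*alp) / beta j⌋₊ : ℝ) ≤ (N:ℝ) := le_trans hfl hub
      exact_mod_cast this
  -- injectivity
  have hinj : ∀ m ∈ Finset.Ico (qd j) (qd (j+1)), ∀ m' ∈ Finset.Ico (qd j) (qd (j+1)),
      F m = F m' → m = m' := by
    intro m hm m' hm' heq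
    obtain ⟨h1, h2⟩ := hmem m hm
    obtain ⟨h1', h2'⟩ := hmem m' hm'
    have hfl : ⌊2 * nd ((m:ℝ)*alp) / beta j⌋₊ = ⌊2 * nd ((m':ℝ)*alp) / beta j⌋₊ := by
      have := congrArg Prod.fst heq; simpa [hF] using this
    have hsd : (Int.fract ((m:ℝ)*alp) ≤ 1/2) ↔ (Int.fract ((m':ℝ)*alp) ≤ 1/2) := by
      have := congrArg Prod.snd heq
      simp only [hF, decide_eq_decide] at this
      exact this
    rcases lt_trichotomy m m' with h | h | h
    · exact absurd (not_distinct j m' m h1 h h2' hfl.symm hsd.symm) not_false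
    · exact h
    · exact absurd (not_distinct j m m' h1' h h2 hfl hsd) not_false
  -- termwise bound
  have hterm : ∀ m ∈ Finset.Ico (qd j) (qd (j+1)),
      (1:ℝ)/((m:ℝ)^2 * nd ((m:ℝ)*alp)^2)
        ≤ 4 / ((qd j:ℝ)^2 * ((F m).1:ℝ)^2 * beta j^2) := by
    intro m hm
    obtain ⟨h1, h2⟩ := hmem m hm
    rw [Finset.mem_Ico] at hm
    have hnd : beta j ≤ nd ((m:ℝ)*alp) := best_approx_nd j m h1 h2
    have hnd0 : 0 ≤ nd ((m:ℝ)*alp) := nd_nonneg _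
    have hfl : ((F m).1 : ℝ) ≤ 2 * nd ((m:ℝ)*alp) / beta j :=
      Nat.floor_le (div_nonneg (by linarith) hB.le)
    have hfl2 : nd ((m:ℝ)*alp) ≥ ((F m).1 : ℝ) * beta j / 2 := by
      rw [ge_iff_le, div_le_iff₀ (by norm_num : (0:ℝ) < 2)]
      calc ((F m).1:ℝ) * beta j ≤ (2 * nd ((m:ℝ)*alp) / beta j) * beta j :=
            mul_le_mul_of_nonneg_right hfl (le_of_lt hB)
        _ = nd ((m:ℝ)*alp) * 2 := by field_simp
    have hq : (qd j : ℝ) ≤ m := by exact_mod_cast hm.1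
    have hqpos := qd_real_pos j
    have hf2 : (2:ℝ) ≤ ((F m).1:ℝ) := by exact_mod_cast (hn2 m (Finset.mem_Ico.mpr hm)).1
    have hndpos : 0 < nd ((m:ℝ)*alp) := lt_of_lt_of_le hB hnd
    have hmpos : (0:ℝ) < m := lt_of_lt_of_le hqpos hq
    have h0 : (0:ℝ) ≤ (qd j:ℝ) * (((F m).1:ℝ) * beta j / 2) := by
      apply mul_nonneg (le_of_lt hqpos)
      apply div_nonneg _ (by norm_num)
      exact mul_nonneg (by linarith) hB.le
    have hprod : (qd j:ℝ) * (((F m).1:ℝ) * beta j / 2) ≤ (m:ℝ) * nd ((m:ℝ)*alp) :=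
      mul_le_mul hq hfl2 (div_nonneg (mul_nonneg (by linarith) hB.le) (by norm_num)) (le_of_lt hmpos)
    have hsq := mul_self_le_mul_self h0 hprod
    rw [div_le_div_iff₀ (by positivity) (by positivity)]
    nlinarith [hsq]
  -- assemble
  have hg : ∀ p : ℕ × Bool, (0:ℝ) ≤ 4 / ((qd j:ℝ)^2 * (p.1:ℝ)^2 * beta j^2) := fun p =>
    div_nonneg (by norm_num) (mul_nonneg (mul_nonneg (sq_nonneg _) (sq_nonneg _)) (sq_nonneg _))
  have hQ := qd_real_pos j
  have hQ1 := qd_real_pos (j+1)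
  have hA : (1:ℝ) ≤ (aseq (j+1):ℝ) := by exact_mod_cast one_le_aseq (j+1)
  have hq1le : (qd (j+1):ℝ) ≤ 2 * (aseq (j+1):ℝ) * qd j := by
    have hrfl : qd (i+2) = aseq (i+2) * qd (i+1) + qd i := rfl
    have h2 : (qd (i+2):ℝ) = (aseq (i+2):ℝ) * qd (i+1) + qd i := by
      rw [hrfl]; push_cast; ring
    have h3 : (qd i : ℝ) ≤ qd (i+1) := by exact_mod_cast qd_le_succ i
    have h4 : (qd (i+1) : ℝ) ≤ (aseq (i+2):ℝ) * qd (i+1) := by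
      nlinarith [qd_real_pos (i+1)]
    show (qd (i+2):ℝ) ≤ 2 * (aseq (i+2):ℝ) * qd (i+1)
    nlinarith [qd_real_pos (i+1)]
  have h1 : (1:ℝ) ≤ beta j * (2 * qd (j+1)) := by
    rw [← div_le_iff₀ (by positivity)]
    exact beta_ge j
  have hz : (1:ℝ)/4 ≤ (aseq (j+1):ℝ) * qd j * beta j := by
    have h2 : (qd (j+1):ℝ) * beta j ≤ (2 * (aseq (j+1):ℝ) * qd j) * beta j :=
      mul_le_mul_of_nonneg_right hq1le hB.le
    nlinarith
  have hfinal : 8 / ((qd j:ℝ)^2 * beta j^2) ≤ 128 * (aseq (j+1):ℝ)^2 := by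
    rw [div_le_iff₀ (by positivity)]
    nlinarith [hz, mul_pos (mul_pos (lt_of_lt_of_le one_pos hA) hQ) hB]
  have hCnn : (0:ℝ) ≤ 8 / ((qd j:ℝ)^2 * beta j^2) := by positivity
  calc ∑ m ∈ Finset.Ico (qd j) (qd (j+1)), (1:ℝ)/((m:ℝ)^2 * nd ((m:ℝ)*alp)^2)
      ≤ ∑ m ∈ Finset.Ico (qd j) (qd (j+1)), 4 / ((qd j:ℝ)^2 * ((F m).1:ℝ)^2 * beta j^2) :=
        Finset.sum_le_sum hterm
    _ = ∑ p ∈ (Finset.Ico (qd j) (qd (j+1))).image F,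
          4 / ((qd j:ℝ)^2 * (p.1:ℝ)^2 * beta j^2) :=
        (Finset.sum_image (f := fun p : ℕ × Bool => (4:ℝ)/((qd j:ℝ)^2 * (p.1:ℝ)^2 * beta j^2)) hinj).symm
    _ ≤ ∑ p ∈ (Finset.Icc 2 N) ×ˢ (Finset.univ : Finset Bool),
          4 / ((qd j:ℝ)^2 * (p.1:ℝ)^2 * beta j^2) := by
        apply Finset.sum_le_sum_of_subset_of_nonneg
        · intro p hp
          rw [Finset.mem_image] at hp
          obtain ⟨m, hm, rfl⟩ := hp
          rw [Finset.mem_product, Finset.mem_Icc]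
          exact ⟨⟨(hn2 m hm).1, (hn2 m hm).2⟩, Finset.mem_univ _⟩
        · intro p _ _
          exact hg p
    _ = ∑ n ∈ Finset.Icc 2 N, (8 / ((qd j:ℝ)^2 * beta j^2)) * (1/(n:ℝ)^2) := by
        rw [Finset.sum_product]
        apply Finset.sum_congr rfl
        intro n _
        show ∑ _b : Bool, 4 / ((qd j:ℝ)^2 * (n:ℝ)^2 * beta j^2) = _
        rw [Finset.sum_const]
        simp only [Finset.card_univ, Fintype.card_bool]
        rw [nsmul_eq_mul]
        push_cast
        field_simp
        ring
    _ = (8 / ((qd j:ℝ)^2 * beta j^2)) * ∑ n ∈ Finset.Icc 2 N, 1/(n:ℝ)^2 := by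
        rw [Finset.mul_sum]
    _ ≤ (8 / ((qd j:ℝ)^2 * beta j^2)) * 1 :=
        mul_le_mul_of_nonneg_left (sum_inv_sq N) hCnn
    _ = 8 / ((qd j:ℝ)^2 * beta j^2) := by ring
    _ ≤ 128 * (aseq (j+1):ℝ)^2 := hfinal

noncomputable def G (m : ℕ) : ℝ := 1/((m:ℝ)^2 * nd ((m:ℝ)*alp)^2)

lemma G_nonneg (m : ℕ) : 0 ≤ G m := by
  rw [G]
  apply div_nonneg (by norm_num)
  exact mul_nonneg (sq_nonneg _) (sq_nonneg _)

lemma S_upper : ∀ K, ∑ m ∈ Finset.Ico 1 (qd K), G m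
    ≤ 128 * ∑ jj ∈ Finset.Ico 1 K, (aseq (jj+1):ℝ)^2 := by
  intro K
  induction K with
  | zero => simp [qd]
  | succ K ih =>
    have hsplit : ∑ m ∈ Finset.Ico 1 (qd K), G m + ∑ m ∈ Finset.Ico (qd K) (qd (K+1)), G m
        = ∑ m ∈ Finset.Ico 1 (qd (K+1)), G m :=
      Finset.sum_Ico_consecutive _ (one_le_qd K) (qd_le_succ K)
    rcases Nat.eq_zero_or_pos K with h0 | h0
    · subst h0
      simp [qd]
    have hrhs : ∑ jj ∈ Finset.Ico 1 (K+1), (aseq (jj+1):ℝ)^2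
        = ∑ jj ∈ Finset.Ico 1 K, (aseq (jj+1):ℝ)^2 + (aseq (K+1):ℝ)^2 := by
      rw [Finset.sum_Ico_succ_top (by omega)]
    have hblock : ∑ m ∈ Finset.Ico (qd K) (qd (K+1)), G m ≤ 128 * (aseq (K+1):ℝ)^2 := by
      cases K with
      | zero =>
        have : Finset.Ico (qd 0) (qd 1) = ∅ := by
          simp [qd]
        rw [this, Finset.sum_empty]
        positivity
      | succ i =>
        have hb := block_bound i
        calc ∑ m ∈ Finset.Ico (qd (i+1)) (qd (i+2)), G m
            = ∑ m ∈ Finset.Ico (qd (i+1)) (qd (i+2)),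
                (1:ℝ)/((m:ℝ)^2 * nd ((m:ℝ)*alp)^2) := by
              apply Finset.sum_congr rfl; intro m _; rw [G]
          _ ≤ 128 * (aseq (i+2):ℝ)^2 := hb
    rw [← hsplit, hrhs]
    linarith

lemma qd_strict {x y : ℕ} (h1 : 1 ≤ x) (hxy : x < y) : qd x < qd y :=
  lt_of_lt_of_le (qd_lt_succ x h1) (qd_mono hxy)

lemma nd_qd_le (jj : ℕ) : nd ((qd jj : ℝ) * alp) ≤ beta jj := by
  have h := nd_le ((qd jj : ℝ) * alp) (pd jj)
  push_cast at h
  have habs : |(qd jj:ℝ) * alp - pd jj| = beta jj := by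
    rw [qd_alp_sub_pd jj, abs_mul, abs_pow, abs_neg, abs_one, one_pow, one_mul, beta]
    exact abs_of_nonneg (mul_nonneg (le_of_lt (qd_real_pos jj)) (Tt_nonneg jj))
  rw [habs] at h
  exact h

lemma S_lower (K M : ℕ) (hK : 1 ≤ K) (hM : qd K ≤ M) :
    ∑ jj ∈ Finset.Icc 1 K, (aseq (jj+1):ℝ)^2 ≤ ∑ m ∈ Finset.Icc 1 M, G m := by
  have hGq : ∀ jj ∈ Finset.Icc 1 K, (aseq (jj+1):ℝ)^2 ≤ G (qd jj) := by
    intro jj hjj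
    rw [Finset.mem_Icc] at hjj
    obtain ⟨i, rfl⟩ := Nat.exists_eq_add_of_le' hjj.1
    have hlt : qd (i+1) < qd (i+2) := qd_lt_succ (i+1) (by omega)
    have hnd_pos : 0 < nd ((qd (i+1):ℝ) * alp) :=
      lt_of_lt_of_le (beta_pos (i+1)) (best_approx_nd (i+1) (qd (i+1)) (one_le_qd (i+1)) hlt)
    have hnd_le : nd ((qd (i+1):ℝ) * alp) ≤ 1 / qd (i+2) :=
      le_trans (nd_qd_le (i+1)) (beta_le (i+1))
    have haq : (aseq (i+2):ℝ) * qd (i+1) ≤ qd (i+2) := by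
      have : qd (i+2) = aseq (i+2) * qd (i+1) + qd i := rfl
      have h2 : aseq (i+2) * qd (i+1) ≤ qd (i+2) := by omega
      exact_mod_cast h2
    have hQ1 := qd_real_pos (i+1)
    have hQ2 := qd_real_pos (i+2)
    have hkey : (aseq (i+2):ℝ) * qd (i+1) * nd ((qd (i+1):ℝ) * alp) ≤ 1 := by
      calc (aseq (i+2):ℝ) * qd (i+1) * nd ((qd (i+1):ℝ) * alp)
          ≤ (qd (i+2):ℝ) * (1 / qd (i+2)) := by
            apply mul_le_mul haq hnd_le (le_of_lt hnd_pos) (le_of_lt hQ2)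
        _ = 1 := by field_simp
    rw [G, le_div_iff₀ (by
      apply mul_pos (pow_pos hQ1 2) (pow_pos hnd_pos 2))]
    have ha0 : (0:ℝ) ≤ (aseq (i+2):ℝ) * qd (i+1) * nd ((qd (i+1):ℝ) * alp) := by
      apply mul_nonneg (mul_nonneg (by positivity) (le_of_lt hQ1)) (le_of_lt hnd_pos)
    nlinarith [hkey, ha0]
  have hinj : ∀ x ∈ Finset.Icc 1 K, ∀ y ∈ Finset.Icc 1 K, qd x = qd y → x = y := by
    intro x hx y hy hxy
    rw [Finset.mem_Icc] at hx hy
    rcases lt_trichotomy x y with h | h | h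
    · exact absurd hxy (ne_of_lt (qd_strict hx.1 h))
    · exact h
    · exact absurd hxy.symm (ne_of_lt (qd_strict hy.1 h))
  calc ∑ jj ∈ Finset.Icc 1 K, (aseq (jj+1):ℝ)^2
      ≤ ∑ jj ∈ Finset.Icc 1 K, G (qd jj) := Finset.sum_le_sum hGq
    _ = ∑ m ∈ (Finset.Icc 1 K).image qd, G m :=
        (Finset.sum_image (f := G) hinj).symm
    _ ≤ ∑ m ∈ Finset.Icc 1 M, G m := by
        apply Finset.sum_le_sum_of_subset_of_nonneg
        · intro m hm
          rw [Finset.mem_image] at hm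
          obtain ⟨jj, hjj, rfl⟩ := hm
          rw [Finset.mem_Icc] at hjj ⊢
          exact ⟨one_le_qd jj, le_trans (qd_mono hjj.2) hM⟩
        · intro m _ _
          exact G_nonneg m

lemma rr_pow_pos (n : ℕ) : 1 ≤ rr^n := Nat.one_le_pow _ _ (by norm_num [rr])

lemma count_upper (i : ℕ) :
    ∑ jj ∈ Finset.Ico 1 (rr^(2*i+1)), (aseq (jj+1):ℝ)^2 ≤ 2 * (rr:ℝ)^(2*i+1) := by
  set K := rr^(2*i+1) with hK
  have hterm : ∀ jj ∈ Finset.Ico 1 K, (aseq (jj+1):ℝ)^2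
      ≤ 1 + 1000000 * (if Odd (Nat.log rr jj) then (1:ℝ) else 0) := by
    intro jj _
    have hv : aseq (jj+1) = if Odd (Nat.log rr jj) then 1000 else 1 := by
      simp [aseq]
    rw [hv]
    split <;> norm_num
  have hfilter : (Finset.Ico 1 K).filter (fun jj => Odd (Nat.log rr jj))
      ⊆ Finset.Ico 1 (rr^(2*i)) := by
    intro jj hjj
    rw [Finset.mem_filter, Finset.mem_Ico] at hjj
    obtain ⟨⟨h1, h2⟩, hodd⟩ := hjj
    rw [Finset.mem_Ico]
    refine ⟨h1, ?_⟩
    have hlog : Nat.log rr jj < 2*i+1 := Nat.log_lt_of_lt_pow (by omega) h2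
    obtain ⟨k, hk⟩ := hodd
    have hlog2 : Nat.log rr jj + 1 ≤ 2*i := by omega
    have := Nat.lt_pow_succ_log_self (by norm_num [rr] : 1 < rr) jj
    calc jj < rr^(Nat.log rr jj + 1) := this
      _ ≤ rr^(2*i) := Nat.pow_le_pow_right (by norm_num [rr]) hlog2
  calc ∑ jj ∈ Finset.Ico 1 K, (aseq (jj+1):ℝ)^2
      ≤ ∑ jj ∈ Finset.Ico 1 K,
          (1 + 1000000 * (if Odd (Nat.log rr jj) then (1:ℝ) else 0)) :=
        Finset.sum_le_sum hterm
    _ = (Finset.Ico 1 K).card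
        + 1000000 * (((Finset.Ico 1 K).filter (fun jj => Odd (Nat.log rr jj))).card : ℝ) := by
        rw [Finset.sum_add_distrib, Finset.sum_const, ← Finset.mul_sum, Finset.sum_boole]
        simp
    _ ≤ (K:ℝ) + 1000000 * (rr:ℝ)^(2*i) := by
        have hc1 : (Finset.Ico 1 K).card ≤ K := by
          rw [Nat.card_Ico]; omega
        have hc2 : ((Finset.Ico 1 K).filter (fun jj => Odd (Nat.log rr jj))).card ≤ rr^(2*i) := by
          calc _ ≤ (Finset.Ico 1 (rr^(2*i))).card := Finset.card_le_card hfilter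
            _ ≤ rr^(2*i) := by rw [Nat.card_Ico]; omega
        have hc1' : ((Finset.Ico 1 K).card : ℝ) ≤ (K:ℝ) := by exact_mod_cast hc1
        have hc2' : (((Finset.Ico 1 K).filter (fun jj => Odd (Nat.log rr jj))).card : ℝ)
            ≤ (rr:ℝ)^(2*i) := by exact_mod_cast hc2
        nlinarith
    _ = 2 * (rr:ℝ)^(2*i+1) := by
        have : (K:ℝ) = (rr:ℝ)^(2*i+1) := by rw [hK]; push_cast; ring
        rw [this, pow_succ]
        norm_num [rr]
        ring

lemma count_lower (i : ℕ) :
    (500000:ℝ) * (rr:ℝ)^(2*i+2) ≤ ∑ jj ∈ Finset.Icc 1 (rr^(2*i+2)), (aseq (jj+1):ℝ)^2 := by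
  set K := rr^(2*i+2) with hK
  have hKlarge : 2 * rr^(2*i+1) ≤ K := by
    have h1 : rr^(2*i+1) * 2 ≤ rr^(2*i+1) * rr :=
      Nat.mul_le_mul_left _ (by norm_num [rr])
    have h2 : rr^(2*i+2) = rr^(2*i+1) * rr := by ring
    omega
  have hsub : Finset.Icc (rr^(2*i+1)) (K-1) ⊆ Finset.Icc 1 K := by
    intro a ha
    rw [Finset.mem_Icc] at ha ⊢
    have := rr_pow_pos (2*i+1)
    omega
  have hval : ∀ jj ∈ Finset.Icc (rr^(2*i+1)) (K-1), (aseq (jj+1):ℝ)^2 = 1000000 := by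
    intro jj hjj
    rw [Finset.mem_Icc] at hjj
    have hlog : Nat.log rr jj = 2*i+1 := by
      apply Nat.log_eq_of_pow_le_of_lt_pow hjj.1
      have h1 := rr_pow_pos (2*i+2)
      have h2 : rr^(2*i+1+1) = rr^(2*i+2) := by ring
      omega
    have hv : aseq (jj+1) = 1000 := by
      simp only [aseq, Nat.add_sub_cancel, hlog]
      rw [if_pos ⟨i, by omega⟩]
    rw [hv]
    norm_num
  have hcard : (Finset.Icc (rr^(2*i+1)) (K-1)).card = K - rr^(2*i+1) := by
    rw [Nat.card_Icc]
    have := rr_pow_pos (2*i+2)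
    omega
  calc (500000:ℝ) * (rr:ℝ)^(2*i+2)
      ≤ ((K - rr^(2*i+1) : ℕ) : ℝ) * 1000000 := by
        have h1 : ((K - rr^(2*i+1) : ℕ) : ℝ) = (K:ℝ) - (rr^(2*i+1):ℕ) := by
          rw [Nat.cast_sub (by omega)]
        rw [h1]
        have h2 : ((rr^(2*i+1):ℕ):ℝ) * 2 ≤ (K:ℝ) := by
          exact_mod_cast (by omega : rr^(2*i+1) * 2 ≤ K)
        have h3 : (K:ℝ) = (rr:ℝ)^(2*i+2) := by rw [hK]; push_cast; ring
        nlinarith [h3.symm.le, h3.le]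
    _ = ∑ jj ∈ Finset.Icc (rr^(2*i+1)) (K-1), (aseq (jj+1):ℝ)^2 := by
        rw [Finset.sum_congr rfl hval, Finset.sum_const, hcard, nsmul_eq_mul]
    _ ≤ ∑ jj ∈ Finset.Icc 1 K, (aseq (jj+1):ℝ)^2 := by
        apply Finset.sum_le_sum_of_subset_of_nonneg hsub
        intro jj _ _
        positivity

lemma log_lower (K : ℕ) (hK : 4 ≤ K) : (K:ℝ)/8 ≤ Real.log ((qd K - 1 : ℕ):ℝ) := by
  have hM : 2^((K-1)/2) ≤ qd K - 1 := by
    have h1 : 2^((K-1)/2) ≤ qd (K-1) := pow_half_le_qd (K-1)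
    have h2 : qd (K-1) + 1 ≤ qd K := by
      obtain ⟨m, rfl⟩ := Nat.exists_eq_add_of_le' (by omega : 2 ≤ K)
      have e : m + 2 - 1 = m + 1 := by omega
      rw [e]
      have : qd (m+2) = aseq (m+2) * qd (m+1) + qd m := rfl
      have h3 := one_le_qd m
      have h4 := Nat.mul_le_mul_right (qd (m+1)) (one_le_aseq (m+2))
      omega
    omega
  have hMR : (2:ℝ)^((K-1)/2 : ℕ) ≤ ((qd K - 1 : ℕ):ℝ) := by exact_mod_cast hM
  have hlog : Real.log ((2:ℝ)^((K-1)/2 : ℕ)) ≤ Real.log ((qd K - 1 : ℕ):ℝ) :=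
    Real.log_le_log (by positivity) hMR
  rw [Real.log_pow] at hlog
  have hlog2 : 0.6931471803 < Real.log 2 := Real.log_two_gt_d9
  have hn : (K:ℝ) - 2 ≤ 2 * (((K-1)/2 : ℕ):ℝ) := by
    have : K - 2 ≤ 2 * ((K-1)/2) := by omega
    calc (K:ℝ) - 2 ≤ ((K - 2 : ℕ):ℝ) := by
          rw [Nat.cast_sub (by omega)]; push_cast; linarith
      _ ≤ (2 * ((K-1)/2 : ℕ) : ℕ) := by exact_mod_cast this
      _ = 2 * (((K-1)/2 : ℕ):ℝ) := by push_cast; ring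
  have hK4 : (4:ℝ) ≤ K := by exact_mod_cast hK
  nlinarith [hlog, hlog2, hn]

lemma log_upper (K : ℕ) : Real.log (qd K) ≤ 7 * K := by
  have h1 : (qd K : ℝ) ≤ (1001:ℝ)^K := by exact_mod_cast qd_le_pow K
  have h2 : Real.log (qd K) ≤ Real.log ((1001:ℝ)^K) :=
    Real.log_le_log (qd_real_pos K) h1
  rw [Real.log_pow] at h2
  have h3 : Real.log 1001 ≤ 7 := by
    have ha : Real.log 1001 ≤ Real.log 1024 := Real.log_le_log (by norm_num) (by norm_num)
    have hb : (1024:ℝ) = 2^10 := by norm_num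
    rw [hb, Real.log_pow] at ha
    have := Real.log_two_lt_d9
    push_cast at ha
    nlinarith
  calc Real.log (qd K) ≤ (K:ℝ) * Real.log 1001 := h2
    _ ≤ (K:ℝ) * 7 := by
        apply mul_le_mul_of_nonneg_left h3 (by positivity)
    _ = 7 * K := by ring

lemma upper_event (i : ℕ) :
    (∑ m ∈ Finset.Icc 1 (qd (rr^(2*i+1)) - 1), G m)
      / Real.log ((qd (rr^(2*i+1)) - 1 : ℕ):ℝ) ≤ 2048 := by
  set K := rr^(2*i+1) with hK
  have hK4 : 4 ≤ K := by
    calc 4 ≤ rr := by norm_num [rr]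
      _ = rr^1 := (pow_one rr).symm
      _ ≤ rr^(2*i+1) := Nat.pow_le_pow_right (by norm_num [rr]) (by omega)
  have hlog := log_lower K hK4
  have hKpos : (0:ℝ) < (K:ℝ)/8 := by
    have : (0:ℕ) < K := by omega
    have : (0:ℝ) < (K:ℝ) := by exact_mod_cast this
    linarith
  have hlogpos : 0 < Real.log ((qd K - 1 : ℕ):ℝ) := lt_of_lt_of_le hKpos hlog
  have hKR : ((K:ℕ):ℝ) = (rr:ℝ)^(2*i+1) := by rw [hK]; push_cast; ring
  have hsum : ∑ m ∈ Finset.Icc 1 (qd K - 1), G m ≤ 256 * (rr:ℝ)^(2*i+1) := by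
    have he : Finset.Icc 1 (qd K - 1) = Finset.Ico 1 (qd K) := by
      rw [← Finset.Ico_add_one_right_eq_Icc]
      congr 1
      have := one_le_qd K
      omega
    rw [he]
    calc ∑ m ∈ Finset.Ico 1 (qd K), G m
        ≤ 128 * ∑ jj ∈ Finset.Ico 1 K, (aseq (jj+1):ℝ)^2 := S_upper K
      _ ≤ 128 * (2 * (rr:ℝ)^(2*i+1)) := by
          have hcu := count_upper i
          nlinarith [hcu]
      _ = 256 * (rr:ℝ)^(2*i+1) := by ring
  rw [div_le_iff₀ hlogpos]
  calc ∑ m ∈ Finset.Icc 1 (qd K - 1), G m ≤ 256 * (rr:ℝ)^(2*i+1) := hsum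
    _ = 2048 * ((K:ℝ)/8) := by rw [hKR]; ring
    _ ≤ 2048 * Real.log ((qd K - 1 : ℕ):ℝ) := by nlinarith [hlog]

lemma lower_event (i : ℕ) :
    (70000:ℝ) ≤ (∑ m ∈ Finset.Icc 1 (qd (rr^(2*i+2))), G m)
      / Real.log ((qd (rr^(2*i+2)) : ℕ):ℝ) := by
  set K := rr^(2*i+2) with hK
  have hK1 : 1 ≤ K := rr_pow_pos _
  have hsum : (500000:ℝ) * (rr:ℝ)^(2*i+2) ≤ ∑ m ∈ Finset.Icc 1 (qd K), G m :=
    le_trans (count_lower i) (S_lower K (qd K) hK1 le_rfl)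
  have hlogub : Real.log ((qd K : ℕ):ℝ) ≤ 7*K := log_upper K
  have hqd2 : 2 ≤ qd K := by
    have h2 : 2 ≤ K := by
      calc 2 ≤ rr := by norm_num [rr]
        _ = rr^1 := (pow_one rr).symm
        _ ≤ rr^(2*i+2) := Nat.pow_le_pow_right (by norm_num [rr]) (by omega)
    have hq2 : 2 ≤ qd 2 := by
      have : qd 2 = aseq 2 * qd 1 + qd 0 := rfl
      have := one_le_aseq 2
      simp [qd] at *
      omega
    calc 2 ≤ qd 2 := hq2
      _ ≤ qd K := qd_mono h2
  have hlogpos : 0 < Real.log ((qd K : ℕ):ℝ) := by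
    apply Real.log_pos
    have : (2:ℝ) ≤ (qd K : ℝ) := by exact_mod_cast hqd2
    linarith
  rw [le_div_iff₀ hlogpos]
  have hKR : ((K:ℕ):ℝ) = (rr:ℝ)^(2*i+2) := by rw [hK]; push_cast; ring
  have hKpos : (1:ℝ) ≤ (K:ℝ) := by exact_mod_cast hK1
  nlinarith [hlogub, hsum, hlogpos]

lemma M_large1 (i : ℕ) : i ≤ qd (rr^(2*i+1)) - 1 := by
  have h1 : rr^(2*i+1) - 1 ≤ qd (rr^(2*i+1)) := by
    rcases Nat.eq_zero_or_pos (rr^(2*i+1)) with h | h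
    · omega
    · obtain ⟨m, hm⟩ := Nat.exists_eq_add_of_le h
      have := le_qd (rr^(2*i+1) - 1)
      have e : rr^(2*i+1) - 1 + 1 = rr^(2*i+1) := by omega
      rw [e] at this
      omega
  have h2 : 2*i+1 < 2^(2*i+1) := (2*i+1).lt_two_pow_self
  have h3 : 2^(2*i+1) ≤ rr^(2*i+1) := Nat.pow_le_pow_left (by norm_num [rr]) _
  omega

lemma M_large2 (i : ℕ) : i ≤ qd (rr^(2*i+2)) := by
  have h1 : rr^(2*i+2) - 1 ≤ qd (rr^(2*i+2)) := by
    have := le_qd (rr^(2*i+2) - 1)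
    have hp := rr_pow_pos (2*i+2)
    have e : rr^(2*i+2) - 1 + 1 = rr^(2*i+2) := by omega
    rw [e] at this
    omega
  have h2 : 2*i+2 < 2^(2*i+2) := (2*i+2).lt_two_pow_self
  have h3 : 2^(2*i+2) ≤ rr^(2*i+2) := Nat.pow_le_pow_left (by norm_num [rr]) _
  omega

end S19

theorem stmt19 :
    ∃ α : ℝ, BadlyApprox α ∧
      ¬ ∃ ℓ : ℝ, Tendsto (fun M : ℕ =>
          (∑ m ∈ Finset.Icc 1 M, 1 / ((m : ℝ) ^ 2 * nd (m * α) ^ 2)) / Real.log M)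
        atTop (nhds ℓ) := by
  refine ⟨S19.alp, S19.badly, ?_⟩
  rintro ⟨ℓ, hℓ⟩
  obtain ⟨N, hN⟩ := Metric.tendsto_atTop.mp hℓ 30000 (by norm_num)
  have h1 := hN (S19.qd (S19.rr^(2*N+1)) - 1) (S19.M_large1 N)
  have h2 := hN (S19.qd (S19.rr^(2*N+2))) (S19.M_large2 N)
  rw [Real.dist_eq, abs_lt] at h1 h2
  have hu := S19.upper_event N
  have hl := S19.lower_event N
  simp only [S19.G] at hu hl
  have e1 : (∑ m ∈ Finset.Icc 1 (S19.qd (S19.rr^(2*N+1)) - 1),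
      1 / ((m : ℝ) ^ 2 * nd (m * S19.alp) ^ 2))
      / Real.log ((S19.qd (S19.rr^(2*N+1)) - 1 : ℕ):ℝ) ≤ 2048 := by
    calc (∑ m ∈ Finset.Icc 1 (S19.qd (S19.rr^(2*N+1)) - 1),
        1 / ((m : ℝ) ^ 2 * nd (m * S19.alp) ^ 2))
        / Real.log ((S19.qd (S19.rr^(2*N+1)) - 1 : ℕ):ℝ)
        = (∑ m ∈ Finset.Icc 1 (S19.qd (S19.rr^(2*N+1)) - 1),
            1 / ((m : ℝ) ^ 2 * nd ((m:ℝ) * S19.alp) ^ 2))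
          / Real.log ((S19.qd (S19.rr^(2*N+1)) - 1 : ℕ):ℝ) := rfl
      _ ≤ 2048 := hu
  have e2 : (70000:ℝ) ≤ (∑ m ∈ Finset.Icc 1 (S19.qd (S19.rr^(2*N+2))),
      1 / ((m : ℝ) ^ 2 * nd (m * S19.alp) ^ 2))
      / Real.log ((S19.qd (S19.rr^(2*N+2)) : ℕ):ℝ) := hl
  beta_reduce at h1 h2
  linarith
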